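/- Let T be a collection of 3-element subsets of [n] with pairwise intersections of size at most 1, and let C₃ = {e_t ∧ ∂e_S : S ∈ T, t ∈ S} and F₃ = {e_t ∧ ∂e_S : S ∈ T, t ∈ [n]∖S} in the exterior algebra E on e₁,…,e_n. Then span(C₃) ∩ span(F₃) = 0, and span(C₃) has dimension |T| (since e_t ∧ ∂e_S = ±e_S for t ∈ S). -/

import Mathlib

open ExteriorAlgebra

variable (n : ℕ)

/-- The standard generator `e i` of the exterior algebra `E = Λ(ℂⁿ)`. -/
noncomputable def gen (i : Fin n) : ExteriorAlgebra ℂ (Fin n → ℂ) :=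
  ι ℂ (Pi.single i (1 : ℂ))

/-- `∂e_{ijk} = e_j ∧ e_k - e_i ∧ e_k + e_i ∧ e_j`. -/
noncomputable def bdry (i j k : Fin n) : ExteriorAlgebra ℂ (Fin n → ℂ) :=
  gen n j * gen n k - gen n i * gen n k + gen n i * gen n j

/-- The underlying 3-element subset of an ordered triple. -/
def toSet (p : Fin n × Fin n × Fin n) : Finset (Fin n) := {p.1, p.2.1, p.2.2}

/-- The determinant functional on triples of vectors, looking only at coordinates `t 0, t 1, t 2`. -/
noncomputable def detMap (t : Fin 3 → Fin n) : (Fin n → ℂ) [⋀^Fin 3]→ₗ[ℂ] ℂ :=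
  (Matrix.detRowAlternating).compLinearMap (LinearMap.funLeft ℂ ℂ t)

/-- The "coefficient of `e_{t 0} ∧ e_{t 1} ∧ e_{t 2}`" linear functional on the exterior
algebra. -/
noncomputable def phi (t : Fin 3 → Fin n) : ExteriorAlgebra ℂ (Fin n → ℂ) →ₗ[ℂ] ℂ :=
  liftAlternating (fun k => match k with
    | 3 => detMap n t
    | _ => 0)

lemma phi_mul (t : Fin 3 → Fin n) (x y z : Fin n → ℂ) :
    phi n t (ι ℂ x * (ι ℂ y * ι ℂ z)) =
      Matrix.det (Matrix.of fun p q => ![x, y, z] p (t q)) := by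
  have h1 : ι ℂ x * (ι ℂ y * ι ℂ z) = ιMulti ℂ 3 ![x, y, z] := by
    rw [ιMulti_apply]
    simp [List.ofFn_succ]
  rw [h1, phi, liftAlternating_apply_ιMulti]
  rfl

lemma phi_gen (t : Fin 3 → Fin n) (a b c : Fin n) :
    phi n t (gen n a * (gen n b * gen n c)) =
      Matrix.det (Matrix.of fun p q => if t q = ![a, b, c] p then (1 : ℂ) else 0) := by
  rw [gen, gen, gen, phi_mul]
  congr 1
  ext p q
  fin_cases p <;> simp [Pi.single_apply] <;> congr

lemma det_id (t : Fin 3 → Fin n) (ht : Function.Injective t) :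
    Matrix.det (Matrix.of fun p q => if t q = t p then (1 : ℂ) else 0) = 1 := by
  have : (Matrix.of fun p q => if t q = t p then (1 : ℂ) else 0) = (1 : Matrix (Fin 3) (Fin 3) ℂ) := by
    ext p q
    simp only [Matrix.of_apply, Matrix.one_apply]
    by_cases h : p = q
    · subst h; simp
    · rw [if_neg (fun hc => h (ht hc).symm), if_neg h]
  rw [this, Matrix.det_one]

lemma det_zero_row (t : Fin 3 → Fin n) (r : Fin 3 → Fin n) (p : Fin 3)
    (h : ∀ q, t q ≠ r p) :
    Matrix.det (Matrix.of fun p q => if t q = r p then (1 : ℂ) else 0) = 0 := by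
  apply Matrix.det_eq_zero_of_row_eq_zero p
  intro q
  simp [h q]

lemma gen_mul_bdry (t a b c : Fin n) :
    gen n t * bdry n a b c =
      gen n t * (gen n b * gen n c) - gen n t * (gen n a * gen n c)
        + gen n t * (gen n a * gen n b) := by
  rw [bdry, mul_add, mul_sub]

lemma gen_sq (x : Fin n) : gen n x * gen n x = 0 := ι_sq_zero _

lemma gen_swap (x y : Fin n) : gen n x * gen n y = -(gen n y * gen n x) :=
  eq_neg_of_add_eq_zero_left (ι_add_mul_swap _ _)

lemma gen_mul_bdry_self (a b c t : Fin n) (ht : t = a ∨ t = b ∨ t = c) :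
    gen n t * bdry n a b c = gen n a * (gen n b * gen n c) := by
  rw [gen_mul_bdry]
  rcases ht with rfl | rfl | rfl
  · rw [show gen n t * (gen n t * gen n c) = 0 by rw [← mul_assoc, gen_sq, zero_mul],
      show gen n t * (gen n t * gen n b) = 0 by rw [← mul_assoc, gen_sq, zero_mul]]
    abel
  · rw [show gen n t * (gen n t * gen n c) = 0 by rw [← mul_assoc, gen_sq, zero_mul]]
    rw [show gen n t * (gen n a * gen n c) = -(gen n a * (gen n t * gen n c)) by
      rw [← mul_assoc, gen_swap n t a, neg_mul, mul_assoc]]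
    rw [show gen n t * (gen n a * gen n t) = 0 by
      rw [← mul_assoc, gen_swap n t a, neg_mul, mul_assoc, gen_sq, mul_zero, neg_zero]]
    abel
  · rw [show gen n t * (gen n b * gen n t) = 0 by
      rw [← mul_assoc, gen_swap n t b, neg_mul, mul_assoc, gen_sq, mul_zero, neg_zero]]
    rw [show gen n t * (gen n a * gen n t) = 0 by
      rw [← mul_assoc, gen_swap n t a, neg_mul, mul_assoc, gen_sq, mul_zero, neg_zero]]
    rw [show gen n t * (gen n a * gen n b) = gen n a * (gen n b * gen n t) by
      rw [← mul_assoc, gen_swap n t a, neg_mul, mul_assoc, gen_swap n t b, mul_neg, neg_neg,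
        ← mul_assoc, mul_assoc]]
    abel

lemma inj3 {α : Type*} (a b c : α) (h1 : a ≠ b) (h2 : a ≠ c) (h3 : b ≠ c) :
    Function.Injective ![a, b, c] := by
  intro p q h
  fin_cases p <;> fin_cases q <;> simp_all

lemma mem_toSet {p : Fin n × Fin n × Fin n} {t : Fin n} :
    t ∈ toSet n p ↔ t = p.1 ∨ t = p.2.1 ∨ t = p.2.2 := by
  simp [toSet]

set_option maxHeartbeats 1000000 in
/-- Let `T` be a collection of 3-element subsets of `[n]` (encoded by a finite family of
increasingly ordered triples `v i`) with pairwise intersections of size at most `1`, and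
let `C₃ = {e_t ∧ ∂e_S : S ∈ T, t ∈ S}` and `F₃ = {e_t ∧ ∂e_S : S ∈ T, t ∉ S}`.  Then
`span(C₃) ∩ span(F₃) = 0`, and `span(C₃)` has dimension `|T|`. -/
theorem span_C3_inf_span_F3 {ι : Type*} [Fintype ι] (v : ι → Fin n × Fin n × Fin n)
    (hord : ∀ i, (v i).1 < (v i).2.1 ∧ (v i).2.1 < (v i).2.2)
    (hshare : ∀ i j, i ≠ j → (toSet n (v i) ∩ toSet n (v j)).card ≤ 1) :
    Submodule.span ℂ {x | ∃ i, ∃ t ∈ toSet n (v i),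
        x = gen n t * bdry n (v i).1 (v i).2.1 (v i).2.2} ⊓
      Submodule.span ℂ {x | ∃ i, ∃ t ∉ toSet n (v i),
        x = gen n t * bdry n (v i).1 (v i).2.1 (v i).2.2} = ⊥ ∧
    Module.finrank ℂ (Submodule.span ℂ {x : ExteriorAlgebra ℂ (Fin n → ℂ) |
        ∃ i, ∃ t ∈ toSet n (v i),
          x = gen n t * bdry n (v i).1 (v i).2.1 (v i).2.2}) = Fintype.card ι := by
  classical
  -- the triple of indices of `v i`, as a function `Fin 3 → Fin n`
  set w : ι → Fin 3 → Fin n := fun i => ![(v i).1, (v i).2.1, (v i).2.2] with hw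
  -- the basic monomial `e_S` for `S = toSet (v i)`
  set m : ι → ExteriorAlgebra ℂ (Fin n → ℂ) :=
    fun i => gen n (v i).1 * (gen n (v i).2.1 * gen n (v i).2.2) with hm
  have hwinj : ∀ i, Function.Injective (w i) := fun i =>
    inj3 _ _ _ ((hord i).1).ne (((hord i).1.trans (hord i).2)).ne ((hord i).2).ne
  have hw_mem : ∀ i (x : Fin n), x ∈ toSet n (v i) ↔ ∃ q, w i q = x := by
    intro i x
    rw [mem_toSet]
    constructor
    · rintro (rfl | rfl | rfl)
      exacts [⟨0, rfl⟩, ⟨1, rfl⟩, ⟨2, rfl⟩]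
    · rintro ⟨q, rfl⟩
      fin_cases q <;> simp [hw]
  -- every element of C₃ is just `m i`
  have hC : ∀ i, ∀ t ∈ toSet n (v i),
      gen n t * bdry n (v i).1 (v i).2.1 (v i).2.2 = m i := by
    intro i t ht
    exact gen_mul_bdry_self n _ _ _ t ((mem_toSet n).1 ht)
  have hsetC : {x | ∃ i, ∃ t ∈ toSet n (v i),
      x = gen n t * bdry n (v i).1 (v i).2.1 (v i).2.2} = Set.range m := by
    ext x
    constructor
    · rintro ⟨i, t, ht, rfl⟩
      exact ⟨i, (hC i t ht).symm⟩
    · rintro ⟨i, rfl⟩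
      refine ⟨i, (v i).1, ?_, (hC i (v i).1 ?_).symm⟩ <;>
        exact (mem_toSet n).2 (Or.inl rfl)
  -- the key determinant computation: phi (w i) on a monomial with a row avoiding `toSet (v i)`
  have hdet0 : ∀ i (a b c : Fin n), (a ∉ toSet n (v i) ∨ b ∉ toSet n (v i) ∨
      c ∉ toSet n (v i)) → phi n (w i) (gen n a * (gen n b * gen n c)) = 0 := by
    intro i a b c h
    rw [phi_gen]
    rcases h with h | h | h
    · refine det_zero_row n (w i) _ 0 (fun q hq => h ?_)
      exact (hw_mem i _).2 ⟨q, by simpa using hq⟩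
    · refine det_zero_row n (w i) _ 1 (fun q hq => h ?_)
      exact (hw_mem i _).2 ⟨q, by simpa using hq⟩
    · refine det_zero_row n (w i) _ 2 (fun q hq => h ?_)
      exact (hw_mem i _).2 ⟨q, by simpa using hq⟩
  -- the toSet's have 3 elements and are "almost disjoint"
  have hcard : ∀ i, (toSet n (v i)).card = 3 := by
    intro i
    have h1 := (hord i).1
    have h2 := (hord i).2
    rw [toSet, Finset.card_insert_of_notMem (by simp; omega),
      Finset.card_insert_of_notMem (by simp; omega), Finset.card_singleton]
  -- duality: phi (w i) (m j) = δ_{ij}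
  have hdual : ∀ i j, phi n (w i) (m j) = if i = j then 1 else 0 := by
    intro i j
    by_cases hij : i = j
    · subst hij
      rw [if_pos rfl, hm]
      have : phi n (w i) (gen n (v i).1 * (gen n (v i).2.1 * gen n (v i).2.2)) =
          Matrix.det (Matrix.of fun p q => if w i q = w i p then (1 : ℂ) else 0) := by
        rw [phi_gen]
      rw [this, det_id n (w i) (hwinj i)]
    · rw [if_neg hij]
      refine hdet0 i (v j).1 (v j).2.1 (v j).2.2 ?_
      by_contra hcon
      push_neg at hcon
      obtain ⟨h1, h2, h3⟩ := hcon
      have hsub : toSet n (v j) ⊆ toSet n (v i) ∩ toSet n (v j) := by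
        intro x hx
        rcases (mem_toSet n).1 hx with rfl | rfl | rfl <;>
          exact Finset.mem_inter.2 ⟨by assumption, hx⟩
      have := (Finset.card_le_card hsub).trans (hshare i j hij)
      rw [hcard j] at this
      omega
  -- phi (w i) kills every element of F₃
  have hkill : ∀ i, ∀ x ∈ {x | ∃ j, ∃ t ∉ toSet n (v j),
      x = gen n t * bdry n (v j).1 (v j).2.1 (v j).2.2}, phi n (w i) x = 0 := by
    rintro i x ⟨j, t, ht, rfl⟩
    rw [gen_mul_bdry, map_add, map_sub]
    have key : ∀ b c : Fin n, b ∈ toSet n (v j) → c ∈ toSet n (v j) → b ≠ c →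
        phi n (w i) (gen n t * (gen n b * gen n c)) = 0 := by
      intro b c hb hc hne
      refine hdet0 i t b c ?_
      by_contra hcon
      push_neg at hcon
      obtain ⟨h1, h2, h3⟩ := hcon
      by_cases hij : i = j
      · exact ht (hij ▸ h1)
      · -- b, c ∈ toSet i ∩ toSet j, and b ≠ c would contradict card ≤ 1;
        -- here b and c are always distinct members of toSet j
        have hbc : b ≠ c → 2 ≤ (toSet n (v i) ∩ toSet n (v j)).card := by
          intro hne
          have : ({b, c} : Finset (Fin n)) ⊆ toSet n (v i) ∩ toSet n (v j) := by
            intro x hx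
            rcases Finset.mem_insert.1 hx with rfl | hx
            · exact Finset.mem_inter.2 ⟨h2, hb⟩
            · rw [Finset.mem_singleton] at hx
              subst hx
              exact Finset.mem_inter.2 ⟨h3, hc⟩
          have := Finset.card_le_card this
          rwa [Finset.card_insert_of_notMem (by simpa using hne),
            Finset.card_singleton] at this
        exact absurd ((hbc hne).trans (hshare i j hij)) (by omega)
    have hne1 : (v j).2.1 ≠ (v j).2.2 := ne_of_lt (hord j).2
    have hne2 : (v j).1 ≠ (v j).2.2 := ne_of_lt ((hord j).1.trans (hord j).2)
    have hne3 : (v j).1 ≠ (v j).2.1 := ne_of_lt (hord j).1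
    have h1 := key (v j).2.1 (v j).2.2 ((mem_toSet n).2 (Or.inr (Or.inl rfl)))
      ((mem_toSet n).2 (Or.inr (Or.inr rfl))) hne1
    have h2 := key (v j).1 (v j).2.2 ((mem_toSet n).2 (Or.inl rfl))
      ((mem_toSet n).2 (Or.inr (Or.inr rfl))) hne2
    have h3 := key (v j).1 (v j).2.1 ((mem_toSet n).2 (Or.inl rfl))
      ((mem_toSet n).2 (Or.inr (Or.inl rfl))) hne3
    rw [h1, h2, h3]
    abel
  -- linear independence of the m i
  have hli : LinearIndependent ℂ m := by
    rw [Fintype.linearIndependent_iff]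
    intro g hg k
    have := congrArg (phi n (w k)) hg
    rw [map_sum, map_zero] at this
    simp only [map_smul] at this
    have heval : ∀ i, g i • phi n (w k) (m i) = if k = i then g i else 0 := by
      intro i
      rw [hdual k i]
      by_cases h : k = i <;> simp [h]
    rw [Finset.sum_congr rfl (fun i _ => heval i), Finset.sum_ite_eq] at this
    simpa using this
  constructor
  · -- intersection is ⊥
    rw [eq_bot_iff]
    rintro x hx
    obtain ⟨hxC, hxF⟩ := Submodule.mem_inf.1 hx
    rw [hsetC] at hxC
    obtain ⟨g, hg⟩ := (Submodule.mem_span_range_iff_exists_fun ℂ).1 hxC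
    have hphix : ∀ k, phi n (w k) x = 0 := by
      intro k
      have hle : Submodule.span ℂ {x | ∃ i, ∃ t ∉ toSet n (v i),
          x = gen n t * bdry n (v i).1 (v i).2.1 (v i).2.2} ≤
          LinearMap.ker (phi n (w k)) := by
        rw [Submodule.span_le]
        intro y hy
        exact LinearMap.mem_ker.2 (hkill k y hy)
      exact LinearMap.mem_ker.1 (hle hxF)
    have hgz : ∀ k, g k = 0 := by
      intro k
      have := congrArg (phi n (w k)) hg
      rw [map_sum] at this
      simp only [map_smul] at this
      rw [hphix k] at this
      have heval : ∀ i, g i • phi n (w k) (m i) = if k = i then g i else 0 := by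
        intro i
        rw [hdual k i]
        by_cases h : k = i <;> simp [h]
      rw [Finset.sum_congr rfl (fun i _ => heval i), Finset.sum_ite_eq] at this
      simpa using this
    have hx0 : x = 0 := by
      rw [← hg]
      exact Finset.sum_eq_zero (fun i _ => by rw [hgz i, zero_smul])
    simp [hx0]
  · rw [hsetC]
    exact finrank_span_eq_card hli
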